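/- (Theorem 2.2, fourth identity, q-case: joint moments of the negative q-trinomial distribution of the first kind.) Let n ≥ 1 be a natural number, α₁, α₂ ∈ (0,1) and m₁, m₂ ∈ ℕ. Then the double series over all pairs (w₁,w₂) ∈ ℕ × ℕ of ( [w₁]_{m₁,q⁻¹} · [w₂]_{m₂,q⁻¹} / ∏_{i=1}^{m₁} (1 + α₂·q^{n+w₂+i−1}) ) · g(w₁,w₂) converges, with sum equal to α₁^{m₁} · α₂^{m₂} · [n+m₁+m₂−1]_{m₁+m₂,q}. -/

import Mathlib

open Finset

/-- q-integer `[k]_q = (1 - q^k)/(1 - q)`. -/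
noncomputable def qInt (q : ℝ) (k : ℤ) : ℝ := (1 - q ^ k) / (1 - q)

/-- q-factorial `[n]_q! = ∏_{i=1}^n [i]_q`. -/
noncomputable def qFact (q : ℝ) (n : ℕ) : ℝ := ∏ i ∈ Finset.Icc 1 n, qInt q (i : ℤ)

/-- q-binomial coefficient `C_q(n,k)`. -/
noncomputable def qBinom (q : ℝ) (n k : ℕ) : ℝ := qFact q n / (qFact q k * qFact q (n - k))

/-- q-falling factorial `[u]_{m,q} = ∏_{i=1}^m [u-i+1]_q`. -/
noncomputable def qFall (q : ℝ) (u : ℤ) (m : ℕ) : ℝ := ∏ i ∈ Finset.Icc 1 m, qInt q (u - (i : ℤ) + 1)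

/-- `[k]_{q⁻¹} = q^{1-k} · [k]_q`. -/
noncomputable def qIntInv (q : ℝ) (k : ℤ) : ℝ := q ^ (1 - k) * qInt q k

/-- `[u]_{m,q⁻¹} = ∏_{i=1}^m [u-i+1]_{q⁻¹}`. -/
noncomputable def qFallInv (q : ℝ) (u : ℤ) (m : ℕ) : ℝ := ∏ i ∈ Finset.Icc 1 m, qIntInv q (u - (i : ℤ) + 1)

/-- `b(k) = k(k-1)/2`. -/
def bb (k : ℕ) : ℕ := k * (k - 1) / 2

/-- `⟨1 ⊕ α⟩_m = ∏_{i=1}^m (1 + α q^{i-1})`. -/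
noncomputable def oplus (q α : ℝ) (m : ℕ) : ℝ := ∏ i ∈ Finset.Icc 1 m, (1 + α * q ^ (i - 1))

/-- `⟨1 ⊖ β⟩_m = ∏_{i=1}^m (1 - β q^{i-1})`. -/
noncomputable def ominus (q β : ℝ) (m : ℕ) : ℝ := ∏ i ∈ Finset.Icc 1 m, (1 - β * q ^ (i - 1))

/-- q-trinomial coefficient `T_q(n; x₁, x₂)`. -/
noncomputable def qTri (q : ℝ) (n x1 x2 : ℕ) : ℝ :=
  qFact q n / (qFact q x1 * qFact q x2 * qFact q (n - x1 - x2))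

/-- pmf of the negative q-trinomial distribution of the first kind. -/
noncomputable def gpmf (q a1 a2 : ℝ) (n w1 w2 : ℕ) : ℝ :=
  (qFact q (n + w1 + w2 - 1) / (qFact q w1 * qFact q w2 * qFact q (n - 1))) *
    a1 ^ w1 * a2 ^ w2 * q ^ (bb w1 + bb w2) /
    (oplus q a1 (n + w1 + w2) * oplus q a2 (n + w2))

open Finset Filter

section Basic
variable {q : ℝ} (hq0 : 0 < q) (hq1 : q < 1)

lemma qInt_coe (n : ℕ) : qInt q (n : ℤ) = (1 - q ^ n) / (1 - q) := by
  rw [qInt, zpow_natCast]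

include hq0 hq1 in
lemma qInt_pos {n : ℕ} (hn : 1 ≤ n) : 0 < qInt q (n : ℤ) := by
  rw [qInt_coe]
  have h1 : q ^ n < 1 := pow_lt_one₀ hq0.le hq1 (by omega)
  apply div_pos <;> linarith

include hq0 hq1 in
lemma one_le_qInt {n : ℕ} (hn : 1 ≤ n) : 1 ≤ qInt q (n : ℤ) := by
  rw [qInt_coe, le_div_iff₀ (by linarith)]
  have h1 : q ^ n ≤ q ^ 1 := pow_le_pow_of_le_one hq0.le hq1.le hn
  simpa using by linarith

include hq0 hq1 in
lemma qInt_le (n : ℕ) : qInt q (n : ℤ) ≤ (1 - q)⁻¹ := by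
  rw [qInt_coe, div_le_iff₀ (by linarith), inv_mul_cancel₀ (by linarith)]
  have : 0 ≤ q ^ n := pow_nonneg hq0.le n
  linarith

lemma qFact_succ (n : ℕ) : qFact q (n + 1) = qFact q n * qInt q ((n + 1 : ℕ) : ℤ) := by
  rw [qFact, qFact, Finset.prod_Icc_succ_top (by omega)]

@[simp] lemma qFact_zero : qFact q 0 = 1 := by simp [qFact]

include hq0 hq1 in
lemma one_le_qFact (n : ℕ) : 1 ≤ qFact q n := by
  induction n with
  | zero => simp
  | succ n ih =>
    rw [qFact_succ]
    exact one_le_mul_of_one_le_of_one_le ih (one_le_qInt hq0 hq1 (by omega))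

include hq0 hq1 in
lemma qFact_pos (n : ℕ) : 0 < qFact q n := lt_of_lt_of_le one_pos (one_le_qFact hq0 hq1 n)

include hq0 hq1 in
lemma qFact_ne (n : ℕ) : qFact q n ≠ 0 := (qFact_pos hq0 hq1 n).ne'

include hq0 hq1 in
lemma qBinom_nonneg (n k : ℕ) : 0 ≤ qBinom q n k := by
  rw [qBinom]
  have h1 := qFact_pos (q := q) hq0 hq1
  exact le_of_lt (div_pos (h1 n) (mul_pos (h1 k) (h1 (n - k))))

include hq0 hq1 in
lemma qBinom_zero (n : ℕ) : qBinom q n 0 = 1 := by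
  have h : n - 0 = n := rfl
  rw [qBinom, h, qFact_zero, one_mul, div_self (qFact_ne hq0 hq1 n)]

include hq0 hq1 in
lemma qBinom_self (n : ℕ) : qBinom q n n = 1 := by
  rw [qBinom, Nat.sub_self, qFact_zero, mul_one, div_self (qFact_ne hq0 hq1 n)]

lemma oplus_succ (α : ℝ) (m : ℕ) : oplus q α (m + 1) = oplus q α m * (1 + α * q ^ m) := by
  rw [oplus, oplus, Finset.prod_Icc_succ_top (by omega)]
  simp

@[simp] lemma oplus_zero (α : ℝ) : oplus q α 0 = 1 := by simp [oplus]

include hq0 in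
lemma one_le_oplus {α : ℝ} (hα : 0 ≤ α) (m : ℕ) : 1 ≤ oplus q α m := by
  induction m with
  | zero => simp
  | succ m ih =>
    rw [oplus_succ]
    have : 0 ≤ α * q ^ m := by positivity
    nlinarith

include hq0 in
lemma oplus_pos {α : ℝ} (hα : 0 ≤ α) (m : ℕ) : 0 < oplus q α m :=
  lt_of_lt_of_le one_pos (one_le_oplus hq0 hα m)

lemma bb_succ (k : ℕ) : bb (k + 1) = bb k + k := by
  match k with
  | 0 => rfl
  | j + 1 =>
    show (j + 2) * (j + 1) / 2 = (j + 1) * j / 2 + (j + 1)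
    rw [← Nat.add_mul_div_right ((j+1)*j) (j+1) (by norm_num)]
    congr 1
    ring

lemma bb_add (a b : ℕ) : bb (a + b) = bb a + bb b + a * b := by
  induction b with
  | zero => simp [bb]
  | succ b ih =>
    rw [show a + (b + 1) = (a + b) + 1 from rfl, bb_succ, ih, bb_succ]
    ring

end Basic

lemma aux2 (A B C : ℝ) (hC : C ≠ 0) : A / (B * C) * C = A / B := by
  rw [div_mul_eq_mul_div, mul_div_mul_right _ _ hC]

lemma aux3 (A B C D E : ℝ) (hB : B ≠ 0) (hC : C ≠ 0) (hD : D ≠ 0) (hE : E ≠ 0) :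
    A / (B * C * D) * (E⁻¹ * C) = A / (B * (D * E)) := by
  field_simp

section Pascal
variable {q : ℝ} (hq0 : 0 < q) (hq1 : q < 1)

include hq1 in
lemma qInt_pascal (j r : ℕ) :
    qInt q ((j + r + 2 : ℕ) : ℤ) =
      qInt q ((r + 1 : ℕ) : ℤ) + q ^ (r + 1) * qInt q ((j + 1 : ℕ) : ℤ) := by
  rw [qInt_coe, qInt_coe, qInt_coe]
  have h : (1 : ℝ) - q ≠ 0 := by linarith
  field_simp
  ring

lemma aux_div (a b c y z w : ℝ) (hb : b ≠ 0) (hc : c ≠ 0) (hy : y ≠ 0) (hz : z ≠ 0) :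
    a * (y + w * z) / (b * z * (c * y)) = a / (b * z * c) + w * (a / (b * (c * y))) := by
  field_simp

include hq0 hq1 in
lemma pascal (j r : ℕ) :
    qBinom q (j + r + 2) (j + 1)
      = qBinom q (j + r + 1) (j + 1) + q ^ (r + 1) * qBinom q (j + r + 1) j := by
  simp only [qBinom]
  rw [show j + r + 2 - (j + 1) = r + 1 by omega, show j + r + 1 - (j + 1) = r by omega,
    show j + r + 1 - j = r + 1 by omega,
    show j + r + 2 = (j + r + 1) + 1 from rfl, qFact_succ]
  rw [show j + r + 1 + 1 = j + r + 2 from rfl, qInt_pascal hq1 j r,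
    qFact_succ (q := q) r, qFact_succ (q := q) j]
  have ha := qFact_ne hq0 hq1 (j + r + 1)
  have hb := qFact_ne hq0 hq1 j
  have hc := qFact_ne hq0 hq1 r
  have hy := (qInt_pos hq0 hq1 (n := r + 1) (by omega)).ne'
  have hz := (qInt_pos hq0 hq1 (n := j + 1) (by omega)).ne'
  exact aux_div _ _ _ _ _ _ hb hc hy hz

include hq0 hq1 in
lemma pascal' {i m : ℕ} (h : i + 1 ≤ m) :
    qBinom q (m + 1) (i + 1) = qBinom q m (i + 1) + q ^ (m - i) * qBinom q m i := by
  obtain ⟨r, hr⟩ : ∃ r, m = i + r + 1 := ⟨m - i - 1, by omega⟩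
  subst hr
  rw [show i + r + 1 + 1 = i + r + 2 from rfl, show i + r + 1 - i = r + 1 by omega]
  exact pascal hq0 hq1 i r

include hq0 hq1 in
lemma pascal_term {α : ℝ} {i m : ℕ} (h : i + 1 ≤ m) :
    qBinom q (m + 1) (i + 1) * q ^ (bb (i + 1)) * α ^ (i + 1)
      = qBinom q m (i + 1) * q ^ (bb (i + 1)) * α ^ (i + 1)
        + (qBinom q m i * q ^ (bb i) * α ^ i) * (α * q ^ m) := by
  rw [pascal' hq0 hq1 h]
  have he : q ^ (m - i) * q ^ (bb (i + 1)) = q ^ (bb i) * q ^ m := by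
    rw [← pow_add, ← pow_add, bb_succ]
    congr 1
    omega
  linear_combination (qBinom q m i * α ^ (i + 1)) * he

include hq0 hq1 in
lemma gauss (α : ℝ) (m : ℕ) :
    oplus q α m = ∑ k ∈ Finset.range (m + 1), qBinom q m k * q ^ (bb k) * α ^ k := by
  induction m with
  | zero => simp [qBinom_zero hq0 hq1, bb]
  | succ m ih =>
    have h1 : ∑ k ∈ Finset.range (m + 2), qBinom q (m+1) k * q ^ (bb k) * α ^ k
        = (∑ i ∈ Finset.range m, qBinom q (m+1) (i+1) * q ^ (bb (i+1)) * α ^ (i+1))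
          + qBinom q (m+1) (m+1) * q ^ (bb (m+1)) * α ^ (m+1)
          + qBinom q (m+1) 0 * q ^ (bb 0) * α ^ 0 := by
      rw [Finset.sum_range_succ' (fun k => qBinom q (m+1) k * q ^ (bb k) * α ^ k) (m+1),
        Finset.sum_range_succ]
    rw [oplus_succ, ih, h1,
      Finset.sum_congr rfl (fun i hi => pascal_term hq0 hq1 (α := α)
        (by have := Finset.mem_range.mp hi; omega)),
      Finset.sum_add_distrib]
    have h3 : qBinom q (m+1) (m+1) * q ^ (bb (m+1)) * α ^ (m+1)
        = (qBinom q m m * q ^ (bb m) * α ^ m) * (α * q ^ m) := by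
      rw [qBinom_self hq0 hq1, qBinom_self hq0 hq1, bb_succ, pow_add]
      ring
    have h4 : qBinom q (m+1) 0 * q ^ (bb 0) * α ^ 0 = qBinom q m 0 * q ^ (bb 0) * α ^ 0 := by
      rw [qBinom_zero hq0 hq1, qBinom_zero hq0 hq1]
    rw [h3, h4]
    rw [show (∑ i ∈ Finset.range m, qBinom q m (i+1) * q ^ (bb (i+1)) * α ^ (i+1))
          + ∑ i ∈ Finset.range m, (qBinom q m i * q ^ (bb i) * α ^ i) * (α * q ^ m)
          + (qBinom q m m * q ^ (bb m) * α ^ m) * (α * q ^ m)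
          + qBinom q m 0 * q ^ (bb 0) * α ^ 0
        = ((∑ i ∈ Finset.range m, qBinom q m (i+1) * q ^ (bb (i+1)) * α ^ (i+1))
            + qBinom q m 0 * q ^ (bb 0) * α ^ 0)
          + ((∑ i ∈ Finset.range m, (qBinom q m i * q ^ (bb i) * α ^ i))
              + qBinom q m m * q ^ (bb m) * α ^ m) * (α * q ^ m) by
        rw [add_mul, Finset.sum_mul]; ring,
      ← Finset.sum_range_succ' (fun k => qBinom q m k * q ^ (bb k) * α ^ k) m,
      ← Finset.sum_range_succ (fun k => qBinom q m k * q ^ (bb k) * α ^ k) m]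
    ring

include hq0 hq1 in
lemma Lrec (α : ℝ) (N' K : ℕ) :
    ∑ k ∈ Finset.range (K + 2), qBinom q (N' + 1 + K + 1) k * q ^ (bb k) * α ^ k
      = (∑ k ∈ Finset.range (K + 1), qBinom q (N' + 1 + K) k * q ^ (bb k) * α ^ k)
          * (1 + α * q ^ (N' + 1 + K))
        + qBinom q (N' + 1 + K) (K + 1) * q ^ (bb (K + 1)) * α ^ (K + 1) := by
  set M := N' + 1 + K with hM
  have h1 : ∑ k ∈ Finset.range (K + 2), qBinom q (M+1) k * q ^ (bb k) * α ^ k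
      = (∑ i ∈ Finset.range (K+1), qBinom q (M+1) (i+1) * q ^ (bb (i+1)) * α ^ (i+1))
        + qBinom q (M+1) 0 * q ^ (bb 0) * α ^ 0 := by
    rw [Finset.sum_range_succ' (fun k => qBinom q (M+1) k * q ^ (bb k) * α ^ k) (K+1)]
  rw [h1,
    Finset.sum_congr rfl (fun i hi => pascal_term hq0 hq1 (α := α)
      (by have := Finset.mem_range.mp hi; omega)),
    Finset.sum_add_distrib]
  have h4 : qBinom q (M+1) 0 * q ^ (bb 0) * α ^ 0 = qBinom q M 0 * q ^ (bb 0) * α ^ 0 := by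
    rw [qBinom_zero hq0 hq1, qBinom_zero hq0 hq1]
  rw [h4]
  rw [show (∑ i ∈ Finset.range (K+1), qBinom q M (i+1) * q ^ (bb (i+1)) * α ^ (i+1))
        + ∑ i ∈ Finset.range (K+1), (qBinom q M i * q ^ (bb i) * α ^ i) * (α * q ^ M)
        + qBinom q M 0 * q ^ (bb 0) * α ^ 0
      = ((∑ i ∈ Finset.range (K+1), qBinom q M (i+1) * q ^ (bb (i+1)) * α ^ (i+1))
          + qBinom q M 0 * q ^ (bb 0) * α ^ 0)
        + (∑ i ∈ Finset.range (K+1), (qBinom q M i * q ^ (bb i) * α ^ i)) * (α * q ^ M) by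
      rw [Finset.sum_mul]; ring,
    ← Finset.sum_range_succ' (fun k => qBinom q M k * q ^ (bb k) * α ^ k) (K+1),
    Finset.sum_range_succ (fun k => qBinom q M k * q ^ (bb k) * α ^ k) (K+1)]
  ring

end Pascal

section OneD
variable {q α : ℝ} (hq0 : 0 < q) (hq1 : q < 1) (hα : 0 < α) (hα1 : α < 1)

include hq0 hq1 hα in
lemma partial_eq (N' K : ℕ) :
    ∑ w ∈ Finset.range (K + 1),
        qBinom q (N' + w) w * α ^ w * q ^ (bb w) / oplus q α (N' + 1 + w)
      = (∑ k ∈ Finset.range (K + 1), qBinom q (N' + 1 + K) k * q ^ (bb k) * α ^ k)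
          / oplus q α (N' + 1 + K) := by
  induction K with
  | zero => simp [qBinom_zero hq0 hq1, bb]
  | succ K ih =>
    rw [Finset.sum_range_succ, ih]
    rw [show N' + (K + 1) = N' + 1 + K by omega,
      show N' + 1 + (K + 1) = N' + 1 + K + 1 by omega, oplus_succ,
      show K + 1 + 1 = K + 2 from rfl, Lrec hq0 hq1 α N' K]
    have h1 : oplus q α (N' + 1 + K) ≠ 0 := (oplus_pos hq0 hα.le _).ne'
    have h2 : (1 : ℝ) + α * q ^ (N' + 1 + K) ≠ 0 := by positivity
    field_simp

include hq0 hq1 in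
lemma qFact_le (k d : ℕ) : qFact q (k + d) ≤ qFact q k * ((1 - q)⁻¹) ^ d := by
  induction d with
  | zero => simp
  | succ d ih =>
    rw [show k + (d + 1) = (k + d) + 1 from rfl, qFact_succ, pow_succ, ← mul_assoc]
    apply mul_le_mul ih (qInt_le hq0 hq1 _) (qInt_pos hq0 hq1 (by omega)).le
    have h1 := qFact_pos hq0 hq1 k
    have h2 : (0:ℝ) < (1 - q)⁻¹ := by
      rw [inv_pos]; linarith
    positivity

include hq0 hq1 in
lemma qBinom_le (k d : ℕ) : qBinom q (k + d) k ≤ ((1 - q)⁻¹) ^ d := by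
  have hFk := qFact_pos hq0 hq1 k
  have hFd := qFact_pos hq0 hq1 d
  have hX : (0:ℝ) ≤ ((1 - q)⁻¹) ^ d := by
    have : (0:ℝ) < (1 - q)⁻¹ := by rw [inv_pos]; linarith
    positivity
  rw [qBinom, Nat.add_sub_cancel_left]
  calc qFact q (k + d) / (qFact q k * qFact q d)
      ≤ qFact q k * ((1 - q)⁻¹) ^ d / (qFact q k * qFact q d) := by
        gcongr
        exact qFact_le hq0 hq1 k d
    _ = ((1 - q)⁻¹) ^ d / qFact q d := by
        rw [mul_div_mul_left _ _ hFk.ne']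
    _ ≤ ((1 - q)⁻¹) ^ d := div_le_self hX (one_le_qFact hq0 hq1 d)

include hq0 hq1 hα hα1 in
lemma tail_bound (N' K : ℕ) :
    oplus q α (N' + 1 + K)
        - (∑ k ∈ Finset.range (K + 1), qBinom q (N' + 1 + K) k * q ^ (bb k) * α ^ k)
      ≤ (N' + 1 : ℝ) * ((1 - q)⁻¹) ^ N' * α ^ (K + 1) := by
  rw [gauss hq0 hq1 α (N' + 1 + K),
    ← Finset.sum_Ico_eq_sub (fun k => qBinom q (N' + 1 + K) k * q ^ (bb k) * α ^ k)
      (by omega : K + 1 ≤ N' + 1 + K + 1)]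
  have hB : ∀ k ∈ Finset.Ico (K + 1) (N' + 1 + K + 1),
      qBinom q (N' + 1 + K) k * q ^ (bb k) * α ^ k ≤ ((1 - q)⁻¹) ^ N' * α ^ (K + 1) := by
    intro k hk
    obtain ⟨hk1, hk2⟩ := Finset.mem_Ico.mp hk
    have hd : ∃ d, N' + 1 + K = k + d ∧ d ≤ N' := ⟨N' + 1 + K - k, by omega⟩
    obtain ⟨d, hdk, hdN⟩ := hd
    have h1 : qBinom q (N' + 1 + K) k ≤ ((1 - q)⁻¹) ^ N' := by
      rw [hdk]
      refine le_trans (qBinom_le hq0 hq1 k d) ?_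
      apply pow_le_pow_right₀ _ hdN
      rw [le_inv_comm₀ one_pos (by linarith)]
      linarith
    have h2 : q ^ (bb k) ≤ 1 := pow_le_one₀ hq0.le hq1.le
    have h3 : α ^ k ≤ α ^ (K + 1) := pow_le_pow_of_le_one hα.le hα1.le hk1
    have hb0 : (0:ℝ) ≤ qBinom q (N' + 1 + K) k := qBinom_nonneg hq0 hq1 _ _
    have hq' : (0:ℝ) ≤ q ^ (bb k) := by positivity
    have hα' : (0:ℝ) ≤ α ^ k := by positivity
    calc qBinom q (N' + 1 + K) k * q ^ (bb k) * α ^ k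
        ≤ ((1 - q)⁻¹) ^ N' * 1 * α ^ (K + 1) := by
          apply mul_le_mul (mul_le_mul h1 h2 hq' (le_trans hb0 h1)) h3 hα'
          have : (0:ℝ) < (1 - q)⁻¹ := by rw [inv_pos]; linarith
          positivity
      _ = ((1 - q)⁻¹) ^ N' * α ^ (K + 1) := by ring
  calc ∑ k ∈ Finset.Ico (K + 1) (N' + 1 + K + 1),
        qBinom q (N' + 1 + K) k * q ^ (bb k) * α ^ k
      ≤ (Finset.Ico (K + 1) (N' + 1 + K + 1)).card • (((1 - q)⁻¹) ^ N' * α ^ (K + 1)) :=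
        Finset.sum_le_card_nsmul _ _ _ hB
    _ = (N' + 1 : ℝ) * ((1 - q)⁻¹) ^ N' * α ^ (K + 1) := by
        rw [Nat.card_Ico, nsmul_eq_mul]
        rw [show N' + 1 + K + 1 - (K + 1) = N' + 1 by omega]
        push_cast
        ring

include hq0 hq1 hα hα1 in
lemma oneD (N' : ℕ) :
    HasSum (fun w : ℕ => qBinom q (N' + w) w * α ^ w * q ^ (bb w) / oplus q α (N' + 1 + w)) 1 := by
  set T : ℕ → ℝ := fun w => qBinom q (N' + w) w * α ^ w * q ^ (bb w) / oplus q α (N' + 1 + w)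
    with hT
  have hTnn : ∀ w, 0 ≤ T w := by
    intro w
    have h1 := qBinom_nonneg hq0 hq1 (N' + w) w
    have h2 := oplus_pos hq0 hα.le (q := q) (N' + 1 + w)
    have h3 : (0:ℝ) ≤ α ^ w := by positivity
    have h4 : (0:ℝ) ≤ q ^ (bb w) := by positivity
    exact div_nonneg (by positivity) h2.le
  rw [hasSum_iff_tendsto_nat_of_nonneg hTnn]
  rw [← Filter.tendsto_add_atTop_iff_nat 1]
  set c : ℝ := (N' + 1 : ℝ) * ((1 - q)⁻¹) ^ N'
  have hc : 0 ≤ c := by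
    have : (0:ℝ) < (1 - q)⁻¹ := by rw [inv_pos]; linarith
    positivity
  have hlow : ∀ K : ℕ, 1 - c * α ^ (K + 1) ≤ ∑ i ∈ Finset.range (K + 1), T i := by
    intro K
    rw [partial_eq hq0 hq1 hα N' K]
    have hop := oplus_pos hq0 hα.le (q := q) (N' + 1 + K)
    have hop1 := one_le_oplus hq0 hα.le (q := q) (N' + 1 + K)
    have htb := tail_bound hq0 hq1 hα hα1 N' K
    rw [le_div_iff₀ hop]
    have hx : 0 ≤ c * α ^ (K + 1) := mul_nonneg hc (by positivity)
    have htb' : oplus q α (N' + 1 + K)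
        - (∑ k ∈ Finset.range (K + 1), qBinom q (N' + 1 + K) k * q ^ (bb k) * α ^ k)
        ≤ c * α ^ (K + 1) := htb
    nlinarith [hx, htb', hop1]
  have hhigh : ∀ K : ℕ, ∑ i ∈ Finset.range (K + 1), T i ≤ 1 := by
    intro K
    rw [partial_eq hq0 hq1 hα N' K]
    have hop := oplus_pos hq0 hα.le (q := q) (N' + 1 + K)
    rw [div_le_one hop, gauss hq0 hq1 α (N' + 1 + K)]
    apply Finset.sum_le_sum_of_subset_of_nonneg
    · exact Finset.range_subset_range.mpr (by omega)
    · intro k _ _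
      have h1 := qBinom_nonneg hq0 hq1 (N' + 1 + K) k
      positivity
  have hlim : Filter.Tendsto (fun K : ℕ => 1 - c * α ^ (K + 1)) Filter.atTop (nhds 1) := by
    have h0 : Filter.Tendsto (fun K : ℕ => α ^ (K + 1)) Filter.atTop (nhds 0) := by
      rw [Filter.tendsto_add_atTop_iff_nat 1]
      exact tendsto_pow_atTop_nhds_zero_of_lt_one hα.le hα1
    have := (h0.const_mul c).const_sub 1
    simpa using this
  exact tendsto_of_tendsto_of_tendsto_of_le_of_le hlim tendsto_const_nhds
    (fun K => hlow K) (fun K => hhigh K)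

end OneD

section TwoD
variable {q α1 α2 : ℝ} (hq0 : 0 < q) (hq1 : q < 1)
  (hα1 : 0 < α1) (hα1' : α1 < 1) (hα2 : 0 < α2) (hα2' : α2 < 1)

include hq0 hq1 hα1 hα2 in
lemma gpmf_factor (N' w1 w2 : ℕ) :
    gpmf q α1 α2 (N' + 1) w1 w2
      = (qBinom q ((N' + w2) + w1) w1 * α1 ^ w1 * q ^ (bb w1)
            / oplus q α1 ((N' + w2) + 1 + w1))
        * (qBinom q (N' + w2) w2 * α2 ^ w2 * q ^ (bb w2) / oplus q α2 (N' + 1 + w2)) := by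
  rw [gpmf, show N' + 1 + w1 + w2 - 1 = N' + w2 + w1 by omega,
    show N' + 1 - 1 = N' from rfl,
    show N' + 1 + w1 + w2 = N' + w2 + 1 + w1 by omega]
  rw [qBinom, qBinom, Nat.add_sub_cancel, Nat.add_sub_cancel]
  have h1 := qFact_ne hq0 hq1
  have h2 : oplus q α1 (N' + w2 + 1 + w1) ≠ 0 := (oplus_pos hq0 hα1.le _).ne'
  have h3 : oplus q α2 (N' + 1 + w2) ≠ 0 := (oplus_pos hq0 hα2.le _).ne'
  field_simp
  rw [div_eq_div_iff
    (mul_ne_zero (mul_ne_zero (h1 _) (h1 _)) (h1 _))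
    (mul_ne_zero (mul_ne_zero (mul_ne_zero (h1 _) (h1 _)) (h1 _)) (h1 _)), pow_add]
  ring

include hq0 hq1 hα1 hα2 in
lemma gpmf_nonneg (n w1 w2 : ℕ) : 0 ≤ gpmf q α1 α2 n w1 w2 := by
  rw [gpmf]
  have h1 := qFact_pos hq0 hq1
  have h2 := oplus_pos hq0 hα1.le (q := q) (n + w1 + w2)
  have h3 := oplus_pos hq0 hα2.le (q := q) (n + w2)
  have h4 : (0:ℝ) ≤ α1 ^ w1 := by positivity
  have h5 : (0:ℝ) ≤ α2 ^ w2 := by positivity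
  have h6 : (0:ℝ) ≤ q ^ (bb w1 + bb w2) := by positivity
  apply div_nonneg _ (mul_pos h2 h3).le
  have := h1 (n + w1 + w2 - 1)
  have := h1 w1
  have := h1 w2
  have := h1 (n - 1)
  positivity

include hq0 hq1 hα1 hα1' hα2 hα2' in
lemma hasSum_gpmf (N' : ℕ) :
    HasSum (fun w : ℕ × ℕ => gpmf q α1 α2 (N' + 1) w.1 w.2) 1 := by
  set F : ℕ × ℕ → ℝ := fun w => gpmf q α1 α2 (N' + 1) w.1 w.2 with hF
  set T2 : ℕ → ℝ :=
    fun w2 => qBinom q (N' + w2) w2 * α2 ^ w2 * q ^ (bb w2) / oplus q α2 (N' + 1 + w2) with hT2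
  have hfiber : ∀ w2, HasSum (fun w1 => F (w1, w2)) (T2 w2) := by
    intro w2
    have h := (oneD hq0 hq1 hα1 hα1' (N' + w2)).mul_right (T2 w2)
    rw [one_mul] at h
    have e : (fun w1 => F (w1, w2)) = fun i => qBinom q (N' + w2 + i) i * α1 ^ i * q ^ bb i
        / oplus q α1 (N' + w2 + 1 + i) * T2 w2 :=
      funext fun w1 => gpmf_factor hq0 hq1 hα1 hα2 N' w1 w2
    rw [e]
    exact h
  have hT2sum : HasSum T2 1 := oneD hq0 hq1 hα2 hα2' N'
  set G : ℕ × ℕ → ℝ := fun p => F (p.2, p.1) with hG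
  have hGnn : 0 ≤ G := fun p => gpmf_nonneg hq0 hq1 hα1 hα2 _ _ _
  have hGfib : ∀ x, Summable fun y => G (x, y) := fun x => (hfiber x).summable
  have hGsummable : Summable G := by
    rw [summable_prod_of_nonneg hGnn]
    refine ⟨hGfib, ?_⟩
    have : (fun x => ∑' y, G (x, y)) = T2 := funext fun x => (hfiber x).tsum_eq
    rw [this]
    exact hT2sum.summable
  have hFG : F ∘ ⇑(Equiv.prodComm ℕ ℕ) = G := rfl
  have hFsummable : Summable F := (Equiv.prodComm ℕ ℕ).summable_iff.mp (hFG ▸ hGsummable)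
  have htsum : ∑' p, F p = 1 := by
    have e1 : ∑' p, F p = ∑' p, G p := by
      rw [← (Equiv.prodComm ℕ ℕ).tsum_eq F]
      rfl
    rw [e1, Summable.tsum_prod' hGsummable hGfib]
    have : (fun x => ∑' y, G (x, y)) = T2 := funext fun x => (hfiber x).tsum_eq
    calc ∑' (b : ℕ) (c : ℕ), G (b, c) = ∑' b, T2 b := by rw [this]
      _ = 1 := hT2sum.tsum_eq
  exact htsum ▸ hFsummable.hasSum

end TwoD

section Reduce
variable {q : ℝ} (hq0 : 0 < q) (hq1 : q < 1)

lemma qInt_zero : qInt q 0 = 0 := by simp [qInt]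

lemma qIntInv_zero : qIntInv q 0 = 0 := by simp [qIntInv, qInt_zero]

include hq0 in
lemma qIntInv_coe (v : ℕ) : qIntInv q ((v + 1 : ℕ) : ℤ) = (q ^ v)⁻¹ * qInt q ((v + 1 : ℕ) : ℤ) := by
  rw [qIntInv]
  congr 1
  rw [show (1 : ℤ) - ((v + 1 : ℕ) : ℤ) = -(v : ℤ) by push_cast; ring, zpow_neg, zpow_natCast]

lemma qFall_succ (u : ℤ) (m : ℕ) :
    qFall q u (m + 1) = qFall q u m * qInt q (u - ((m + 1 : ℕ) : ℤ) + 1) := by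
  rw [qFall, qFall, Finset.prod_Icc_succ_top (by omega)]

lemma qFallInv_succ (u : ℤ) (m : ℕ) :
    qFallInv q u (m + 1) = qFallInv q u m * qIntInv q (u - ((m + 1 : ℕ) : ℤ) + 1) := by
  rw [qFallInv, qFallInv, Finset.prod_Icc_succ_top (by omega)]

include hq0 hq1 in
lemma qFall_eq (m v : ℕ) : qFall q ((m + v : ℕ) : ℤ) m = qFact q (m + v) / qFact q v := by
  induction m generalizing v with
  | zero => simp [qFall, div_self (qFact_ne hq0 hq1 v)]
  | succ m ih =>
    rw [qFall_succ, show ((m + 1 + v : ℕ) : ℤ) - ((m + 1 : ℕ) : ℤ) + 1 = ((v + 1 : ℕ) : ℤ) by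
        push_cast; ring,
      show ((m + 1 + v : ℕ) : ℤ) = ((m + (v + 1) : ℕ) : ℤ) by push_cast; ring,
      ih (v + 1), qFact_succ (q := q) v,
      show m + (v + 1) = m + 1 + v by omega]
    exact aux2 _ _ _ (qInt_pos hq0 hq1 (n := v + 1) (by omega)).ne'

include hq0 hq1 in
lemma qFallInv_eq (m v : ℕ) :
    qFallInv q ((m + v : ℕ) : ℤ) m = qFact q (m + v) / (qFact q v * q ^ (m * v + bb m)) := by
  induction m generalizing v with
  | zero => simp [qFallInv, bb, div_self (qFact_ne hq0 hq1 v)]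
  | succ m ih =>
    rw [qFallInv_succ, show ((m + 1 + v : ℕ) : ℤ) - ((m + 1 : ℕ) : ℤ) + 1 = ((v + 1 : ℕ) : ℤ) by
        push_cast; ring,
      show ((m + 1 + v : ℕ) : ℤ) = ((m + (v + 1) : ℕ) : ℤ) by push_cast; ring,
      ih (v + 1), qIntInv_coe hq0 v, qFact_succ (q := q) v,
      show m + (v + 1) = m + 1 + v by omega]
    have hpow : q ^ ((m + 1) * v + bb (m + 1)) = q ^ (m * (v + 1) + bb m) * q ^ v := by
      rw [← pow_add]
      congr 1
      rw [bb_succ]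
      ring
    rw [hpow]
    exact aux3 _ _ _ _ _ (qFact_ne hq0 hq1 v) (qInt_pos hq0 hq1 (n := v + 1) (by omega)).ne'
      (pow_ne_zero _ hq0.ne') (pow_ne_zero _ hq0.ne')

lemma qFallInv_zero_of_lt {w m : ℕ} (h : w < m) : qFallInv q ((w : ℕ) : ℤ) m = 0 := by
  rw [qFallInv]
  apply Finset.prod_eq_zero (i := w + 1) (Finset.mem_Icc.mpr (by omega))
  rw [show ((w : ℕ) : ℤ) - ((w + 1 : ℕ) : ℤ) + 1 = 0 by push_cast; ring]
  exact qIntInv_zero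

lemma oplus_add (α : ℝ) (a m : ℕ) :
    oplus q α (a + m) = oplus q α a * ∏ i ∈ Finset.Icc 1 m, (1 + α * q ^ (a + i - 1)) := by
  induction m with
  | zero => simp
  | succ m ih =>
    rw [show a + (m + 1) = (a + m) + 1 from rfl, oplus_succ, ih,
      Finset.prod_Icc_succ_top (by omega : 1 ≤ m + 1),
      show a + (m + 1) - 1 = a + m by omega]
    ring

end Reduce

section Final
variable {q α1 α2 : ℝ} (hq0 : 0 < q) (hq1 : q < 1) (hα1 : 0 < α1) (hα2 : 0 < α2)

include hq0 hq1 hα1 hα2 in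
set_option maxHeartbeats 2000000 in
lemma key_id (N' m1 m2 v1 v2 : ℕ) :
    qFallInv q ((m1 + v1 : ℕ) : ℤ) m1 * qFallInv q ((m2 + v2 : ℕ) : ℤ) m2
      / (∏ i ∈ Finset.Icc 1 m1, (1 + α2 * q ^ (N' + 1 + (m2 + v2) + i - 1)))
      * gpmf q α1 α2 (N' + 1) (m1 + v1) (m2 + v2)
    = (α1 ^ m1 * α2 ^ m2 * (qFact q (N' + m1 + m2) / qFact q N'))
        * gpmf q α1 α2 (N' + m1 + m2 + 1) v1 v2 := by
  rw [qFallInv_eq hq0 hq1 m1 v1, qFallInv_eq hq0 hq1 m2 v2]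
  simp only [gpmf]
  rw [show N' + 1 + (m1 + v1) + (m2 + v2) - 1 = N' + m1 + m2 + v1 + v2 by omega,
    show N' + m1 + m2 + 1 + v1 + v2 - 1 = N' + m1 + m2 + v1 + v2 by omega,
    show N' + 1 - 1 = N' from rfl,
    show N' + m1 + m2 + 1 - 1 = N' + m1 + m2 from rfl,
    show N' + 1 + (m1 + v1) + (m2 + v2) = N' + m1 + m2 + 1 + v1 + v2 by omega,
    show N' + m1 + m2 + 1 + v2 = N' + 1 + (m2 + v2) + m1 by omega,
    oplus_add α2 (N' + 1 + (m2 + v2)) m1]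
  have hα1p : α1 ^ (m1 + v1) = α1 ^ m1 * α1 ^ v1 := pow_add _ _ _
  have hα2p : α2 ^ (m2 + v2) = α2 ^ m2 * α2 ^ v2 := pow_add _ _ _
  have hqp : q ^ (bb (m1 + v1) + bb (m2 + v2))
      = q ^ (m1 * v1 + bb m1) * q ^ (m2 * v2 + bb m2) * q ^ (bb v1 + bb v2) := by
    rw [← pow_add, ← pow_add]
    congr 1
    rw [bb_add m1 v1, bb_add m2 v2]
    ring
  rw [hα1p, hα2p, hqp]
  have hF := qFact_ne hq0 hq1
  have hop1 : oplus q α1 (N' + m1 + m2 + 1 + v1 + v2) ≠ 0 := (oplus_pos hq0 hα1.le _).ne'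
  have hop2 : oplus q α2 (N' + 1 + (m2 + v2)) ≠ 0 := (oplus_pos hq0 hα2.le _).ne'
  have hD : (∏ i ∈ Finset.Icc 1 m1, (1 + α2 * q ^ (N' + 1 + (m2 + v2) + i - 1))) ≠ 0 := by
    apply ne_of_gt
    apply Finset.prod_pos
    intro i _
    positivity
  have hp1 : q ^ (m1 * v1 + bb m1) ≠ 0 := pow_ne_zero _ hq0.ne'
  have hp2 : q ^ (m2 * v2 + bb m2) ≠ 0 := pow_ne_zero _ hq0.ne'
  field_simp [hF, hop1, hop2, hD, hp1, hp2]

end Final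


theorem stmt8 (q : ℝ) (hq0 : 0 < q) (hq1 : q < 1) (n : ℕ) (hn : 1 ≤ n) (α1 α2 : ℝ)
    (hα1 : 0 < α1) (hα1' : α1 < 1) (hα2 : 0 < α2) (hα2' : α2 < 1) (m1 m2 : ℕ) :
    HasSum (fun w : ℕ × ℕ =>
        qFallInv q (w.1 : ℤ) m1 * qFallInv q (w.2 : ℤ) m2
          / (∏ i ∈ Finset.Icc 1 m1, (1 + α2 * q ^ (n + w.2 + i - 1)))
          * gpmf q α1 α2 n w.1 w.2)
      (α1 ^ m1 * α2 ^ m2 * qFall q ((n : ℤ) + (m1 : ℤ) + (m2 : ℤ) - 1) (m1 + m2)) := by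
  obtain ⟨N', rfl⟩ : ∃ N', n = N' + 1 := ⟨n - 1, by omega⟩
  have hC : qFall q (((N' + 1 : ℕ) : ℤ) + (m1 : ℤ) + (m2 : ℤ) - 1) (m1 + m2)
      = qFact q (N' + m1 + m2) / qFact q N' := by
    rw [show ((N' + 1 : ℕ) : ℤ) + (m1 : ℤ) + (m2 : ℤ) - 1 = (((m1 + m2) + N' : ℕ) : ℤ) by
        push_cast; ring,
      qFall_eq hq0 hq1 (m1 + m2) N', show m1 + m2 + N' = N' + m1 + m2 by omega]
  rw [hC]
  set Φ : ℕ × ℕ → ℝ := fun w =>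
    qFallInv q (w.1 : ℤ) m1 * qFallInv q (w.2 : ℤ) m2
      / (∏ i ∈ Finset.Icc 1 m1, (1 + α2 * q ^ (N' + 1 + w.2 + i - 1)))
      * gpmf q α1 α2 (N' + 1) w.1 w.2 with hΦ
  have hι : Function.Injective (fun v : ℕ × ℕ => ((m1 + v.1, m2 + v.2) : ℕ × ℕ)) := by
    intro a b h
    simp only [Prod.mk.injEq] at h
    exact Prod.ext (by omega) (by omega)
  have hz : ∀ w ∉ Set.range (fun v : ℕ × ℕ => ((m1 + v.1, m2 + v.2) : ℕ × ℕ)), Φ w = 0 := by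
    intro w hw
    have hlt : w.1 < m1 ∨ w.2 < m2 := by
      by_contra hcon
      push_neg at hcon
      exact hw ⟨(w.1 - m1, w.2 - m2), Prod.ext (by simp; omega) (by simp; omega)⟩
    rcases hlt with h | h
    · rw [hΦ]
      simp only
      rw [qFallInv_zero_of_lt h, zero_mul, zero_div, zero_mul]
    · rw [hΦ]
      simp only
      rw [qFallInv_zero_of_lt h, mul_zero, zero_div, zero_mul]
  apply (hι.hasSum_iff hz).mp
  have h2 := (hasSum_gpmf hq0 hq1 hα1 hα1' hα2 hα2' (N' + m1 + m2)).mul_left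
    (α1 ^ m1 * α2 ^ m2 * (qFact q (N' + m1 + m2) / qFact q N'))
  rw [mul_one] at h2
  have hfun : (Φ ∘ fun v : ℕ × ℕ => ((m1 + v.1, m2 + v.2) : ℕ × ℕ))
      = fun v : ℕ × ℕ => (α1 ^ m1 * α2 ^ m2 * (qFact q (N' + m1 + m2) / qFact q N'))
          * gpmf q α1 α2 (N' + m1 + m2 + 1) v.1 v.2 := by
    funext v
    exact key_id hq0 hq1 hα1 hα2 N' m1 m2 v.1 v.2
  rw [hfun]
  exact h2
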